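/- Compatibility of the limiting single-letter kernels: let q_{X,Z} be a distribution on 𝒳×𝒵 and q_{X,Y} a distribution on 𝒳×𝒴, with 𝒳, 𝒵, 𝒴 finite. For each n, let P^{(n)} be a distribution on 𝒳^n×𝒵^n×𝒴^n such that P^{(n)}_{X^n,Z^n} = q_{X,Z}^{⊗n} and P^{(n)} satisfies the Markov chain X^n − Z^n − Y^n (i.e., P^{(n)}(x^n,z^n,y^n) = P^{(n)}_{Z^n,Y^n}(z^n,y^n)·∏_{t=1}^n q_{X|Z}(x_t|z_t)). Suppose ‖P^{(n)}_{X^n,Y^n} − q_{X,Y}^{⊗n}‖_TV → 0 and there is a sequence (ρ^{(t)}_{Y|Z})_{t≥1} of conditional probability kernels from 𝒵 to 𝒴 with ‖P^{(n)}_{Z^n,Y^n} − ∏_{t=1}^n (q_Z·ρ^{(t)}_{Y|Z})‖_TV → 0 as n → ∞. Then for every t ≥ 1, the kernel ρ^{(t)}_{Y|Z} is compatible with (q_{X,Z}, q_{X,Y}), i.e., for all (x,y) ∈ 𝒳×𝒴, ∑_{z∈𝒵} q_Z(z)·q_{X|Z}(x|z)·ρ^{(t)}_{Y|Z}(y|z)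 = q_{X,Y}(x,y). -/
import Mathlib


open scoped BigOperators
open Filter

namespace RCS

/-- `p` is a probability mass function on the finite type `S`. -/
def IsPMF {S : Type*} [Fintype S] (p : S → ℝ) : Prop :=
  (∀ s, 0 ≤ p s) ∧ ∑ s, p s = 1

/-- `k` is a conditional probability kernel from `A` to `B`. -/
def IsKernel {A B : Type*} [Fintype B] (k : A → B → ℝ) : Prop :=
  ∀ a, IsPMF (k a)

/-- Total variation distance between two pmfs on a finite type. -/
noncomputable def TV {S : Type*} [Fintype S] (p q : S → ℝ) : ℝ :=
  (1 / 2) * ∑ s, |p s - q s|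

/-- Shannon mutual information (in nats) of a joint pmf given in curried form,
with the convention `0·log(0/x) = 0` (automatic since `Real.log 0 = 0`). -/
noncomputable def MI {U V : Type*} [Fintype U] [Fintype V] (p : U → V → ℝ) : ℝ :=
  ∑ u, ∑ v, p u v * Real.log (p u v / ((∑ v', p u v') * (∑ u', p u' v)))

/-- Compatibility of the limiting single-letter kernels: if
`P^{(n)}_{X^n,Z^n} = q_{X,Z}^{⊗n}`, `P^{(n)}` satisfies the Markov chain
`X^n − Z^n − Y^n` through the memoryless channel `q_{X|Z}`,
`‖P^{(n)}_{X^n,Y^n} − q_{X,Y}^{⊗n}‖_TV → 0` and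
`‖P^{(n)}_{Z^n,Y^n} − ∏_{t=1}^n (q_Z·ρ^{(t)}_{Y|Z})‖_TV → 0`, then every kernel
`ρ^{(t)}_{Y|Z}` is compatible with `(q_{X,Z},q_{X,Y})`:
`∑_z q_Z(z)·q_{X|Z}(x|z)·ρ^{(t)}_{Y|Z}(y|z) = q_{X,Y}(x,y)` for all `(x,y)`. -/
lemma sum_fun_prod {ι α : Type*} [Fintype ι] [DecidableEq ι] [Fintype α] (F : ι → α → ℝ) :
    ∑ f : ι → α, ∏ j, F j (f j) = ∏ j, ∑ a, F j a := by
  rw [Finset.prod_univ_sum, Fintype.piFinset_univ]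

lemma sum_sum_fun_prod {ι α β : Type*} [Fintype ι] [DecidableEq ι] [Fintype α] [Fintype β]
    (F : ι → α → β → ℝ) :
    ∑ f : ι → α, ∑ g : ι → β, ∏ j, F j (f j) (g j) = ∏ j, ∑ a, ∑ b, F j a b := by
  calc ∑ f : ι → α, ∑ g : ι → β, ∏ j, F j (f j) (g j)
      = ∑ f : ι → α, ∏ j, ∑ b, F j (f j) b :=
        Finset.sum_congr rfl (fun f _ => sum_fun_prod (fun j b => F j (f j) b))
    _ = ∏ j, ∑ a, ∑ b, F j a b := sum_fun_prod (fun j a => ∑ b, F j a b)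

lemma tv_weighted {S : Type*} [Fintype S] (w p q : S → ℝ) (hw : ∀ s, |w s| ≤ 1) :
    |∑ s, w s * p s - ∑ s, w s * q s| ≤ 2 * TV p q := by
  rw [← Finset.sum_sub_distrib]
  simp_rw [← mul_sub]
  calc |∑ s, w s * (p s - q s)| ≤ ∑ s, |w s * (p s - q s)| := Finset.abs_sum_le_sum_abs _ _
    _ ≤ ∑ s, |p s - q s| := by
        refine Finset.sum_le_sum fun s _ => ?_
        rw [abs_mul]
        exact mul_le_of_le_one_left (abs_nonneg _) (hw s)
    _ = 2 * TV p q := by unfold TV; ring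

set_option maxHeartbeats 1000000 in
theorem limiting_kernels_compatible
    {X Z Y : Type*} [Fintype X] [Fintype Z] [Fintype Y]
    (qXZ : X → Z → ℝ) (qXY : X → Y → ℝ)
    (hqXZ : IsPMF (fun s : X × Z => qXZ s.1 s.2))
    (hqXY : IsPMF (fun s : X × Y => qXY s.1 s.2))
    (P : ∀ n : ℕ, (Fin n → X) → (Fin n → Z) → (Fin n → Y) → ℝ)
    (hP : ∀ n, IsPMF (fun s : (Fin n → X) × (Fin n → Z) × (Fin n → Y) =>
        P n s.1 s.2.1 s.2.2))
    (hPXZ : ∀ n (x : Fin n → X) (z : Fin n → Z),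
        (∑ y, P n x z y) = ∏ t, qXZ (x t) (z t))
    (hMarkov : ∀ n (x : Fin n → X) (z : Fin n → Z) (y : Fin n → Y),
        P n x z y = (∑ x', P n x' z y) *
          ∏ t, qXZ (x t) (z t) / (∑ x', qXZ x' (z t)))
    (hXY : Tendsto (fun n =>
        TV (fun xy : (Fin n → X) × (Fin n → Y) => ∑ z, P n xy.1 z xy.2)
           (fun xy => ∏ t, qXY (xy.1 t) (xy.2 t))) atTop (nhds 0))
    (ρ : ℕ → Z → Y → ℝ) (hρ : ∀ t, IsKernel (ρ t))
    (hZY : Tendsto (fun n =>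
        TV (fun zy : (Fin n → Z) × (Fin n → Y) => ∑ x, P n x zy.1 zy.2)
           (fun zy => ∏ t : Fin n,
             (∑ x, qXZ x (zy.1 t)) * ρ t.val (zy.1 t) (zy.2 t))) atTop (nhds 0)) :
    ∀ (t : ℕ) (x : X) (y : Y),
      (∑ z, (∑ x', qXZ x' z) * (qXZ x z / (∑ x', qXZ x' z)) * ρ t z y)
        = qXY x y := by
  classical
  intro t x y
  -- basic facts about qXZ
  have hqXZ0 : ∀ x' z, 0 ≤ qXZ x' z := fun x' z => hqXZ.1 (x', z)
  have hqZ0 : ∀ z, 0 ≤ ∑ x', qXZ x' z :=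
    fun z => Finset.sum_nonneg fun _ _ => hqXZ0 _ _
  have hle : ∀ x' z, qXZ x' z ≤ ∑ x'', qXZ x'' z := fun x' z =>
    Finset.single_le_sum (fun a _ => hqXZ0 a z) (Finset.mem_univ x')
  have hzero : ∀ z, (∑ x', qXZ x' z) = 0 → ∀ x', qXZ x' z = 0 := fun z hz x' =>
    le_antisymm (hz ▸ hle x' z) (hqXZ0 x' z)
  have hratio : ∀ z, (qXZ x z / ∑ x', qXZ x' z) * (∑ x', qXZ x' z) = qXZ x z := by
    intro z
    by_cases h : (∑ x', qXZ x' z) = 0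
    · simp [h, hzero z h x]
    · field_simp
  have hratio01 : ∀ z, 0 ≤ qXZ x z / (∑ x', qXZ x' z) ∧ qXZ x z / (∑ x', qXZ x' z) ≤ 1 := by
    intro z
    refine ⟨div_nonneg (hqXZ0 x z) (hqZ0 z), ?_⟩
    by_cases h : (∑ x', qXZ x' z) = 0
    · simp [h]
    · rw [div_le_one (lt_of_le_of_ne (hqZ0 z) (Ne.symm h))]; exact hle x z
  have hqZ1 : ∑ z, ∑ x', qXZ x' z = 1 := by
    have h := hqXZ.2
    rw [Fintype.sum_prod_type] at h
    rw [Finset.sum_comm]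
    exact h
  have hqXY1 : ∑ x', ∑ y', qXY x' y' = 1 := by
    have h := hqXY.2
    rw [Fintype.sum_prod_type] at h
    exact h
  -- rewrite the goal's LHS
  have hgoal : (∑ z, (∑ x', qXZ x' z) * (qXZ x z / (∑ x', qXZ x' z)) * ρ t z y)
      = ∑ z, qXZ x z * ρ t z y := by
    refine Finset.sum_congr rfl fun z _ => ?_
    rw [mul_comm (∑ x', qXZ x' z) (qXZ x z / (∑ x', qXZ x' z)), hratio z]
  rw [hgoal]
  set c := ∑ z, qXZ x z * ρ t z y with hc
  -- the main estimate
  have key : ∀ ε : ℝ, 0 < ε → |qXY x y - c| ≤ ε := by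
    intro ε hε
    have h1 := hXY.eventually_lt_const (show (0:ℝ) < ε/4 by linarith)
    have h2 := hZY.eventually_lt_const (show (0:ℝ) < ε/4 by linarith)
    have h3 : ∀ᶠ n : ℕ in atTop, t < n := eventually_gt_atTop t
    obtain ⟨n, ⟨hTV1, hTV2⟩, hn⟩ := ((h1.and h2).and h3).exists
    set i : Fin n := ⟨t, hn⟩ with hi
    have hival : (i : ℕ) = t := rfl
    -- weights
    set wXY : (Fin n → X) × (Fin n → Y) → ℝ :=
      fun xy => (if xy.1 i = x then (1:ℝ) else 0) * (if xy.2 i = y then 1 else 0) with hwXY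
    set wZY : (Fin n → Z) × (Fin n → Y) → ℝ :=
      fun zy => (if zy.2 i = y then (1:ℝ) else 0) *
        (qXZ x (zy.1 i) / ∑ x', qXZ x' (zy.1 i)) with hwZY
    have habs1 : ∀ xy, |wXY xy| ≤ 1 := by
      intro xy
      by_cases h1' : xy.1 i = x <;> by_cases h2' : xy.2 i = y <;> simp [hwXY, h1', h2']
    have habs2 : ∀ zy, |wZY zy| ≤ 1 := by
      intro zy
      simp only [hwZY]
      by_cases h2' : zy.2 i = y
      · rw [if_pos h2', one_mul, abs_of_nonneg (hratio01 _).1]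
        exact (hratio01 _).2
      · rw [if_neg h2', zero_mul, abs_zero]
        exact zero_le_one
    -- claim (a): weighted product marginal equals qXY x y
    have ha : ∑ xy : (Fin n → X) × (Fin n → Y), wXY xy * ∏ j, qXY (xy.1 j) (xy.2 j)
        = qXY x y := by
      rw [Fintype.sum_prod_type]
      have step : ∀ (xs : Fin n → X) (ys : Fin n → Y),
          wXY (xs, ys) * ∏ j, qXY (xs j) (ys j)
          = ∏ j, ((if j = i then (if xs j = x then (1:ℝ) else 0) * (if ys j = y then 1 else 0)
              else 1) * qXY (xs j) (ys j)) := by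
        intro xs ys
        conv_rhs => rw [Finset.prod_mul_distrib]
        congr 1
        simp [hwXY, Finset.prod_ite_eq']
      calc ∑ xs, ∑ ys, wXY (xs, ys) * ∏ j, qXY (xs j) (ys j)
          = ∑ xs, ∑ ys, ∏ j, ((if j = i then (if xs j = x then (1:ℝ) else 0) *
              (if ys j = y then 1 else 0) else 1) * qXY (xs j) (ys j)) :=
            Finset.sum_congr rfl fun xs _ => Finset.sum_congr rfl fun ys _ => step xs ys
        _ = ∏ j, ∑ a, ∑ b, ((if j = i then (if a = x then (1:ℝ) else 0) *
              (if b = y then 1 else 0) else 1) * qXY a b) :=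
            sum_sum_fun_prod (fun j a b => (if j = i then (if a = x then (1:ℝ) else 0) *
              (if b = y then 1 else 0) else 1) * qXY a b)
        _ = ∏ j : Fin n, if j = i then qXY x y else 1 := by
            refine Finset.prod_congr rfl fun j _ => ?_
            by_cases hj : j = i
            · simp only [hj, if_pos rfl]
              simp [ite_mul, Finset.sum_ite_eq']
            · simp [hj, hqXY1]
        _ = qXY x y := by simp [Finset.prod_ite_eq']
    -- claim (b): weighted product ZY marginal equals c
    have hb : ∑ zy : (Fin n → Z) × (Fin n → Y),
        wZY zy * ∏ j : Fin n, (∑ x', qXZ x' (zy.1 j)) * ρ j.val (zy.1 j) (zy.2 j)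
        = c := by
      rw [Fintype.sum_prod_type]
      have step : ∀ (zs : Fin n → Z) (ys : Fin n → Y),
          wZY (zs, ys) * ∏ j : Fin n, (∑ x', qXZ x' (zs j)) * ρ j.val (zs j) (ys j)
          = ∏ j : Fin n, ((if j = i then (if ys j = y then (1:ℝ) else 0) *
              (qXZ x (zs j) / ∑ x', qXZ x' (zs j)) else 1) *
              ((∑ x', qXZ x' (zs j)) * ρ j.val (zs j) (ys j))) := by
        intro zs ys
        conv_rhs => rw [Finset.prod_mul_distrib]
        congr 1
        simp [hwZY, Finset.prod_ite_eq']
      calc ∑ zs, ∑ ys, wZY (zs, ys) * ∏ j : Fin n, (∑ x', qXZ x' (zs j)) * ρ j.val (zs j) (ys j)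
          = ∑ zs, ∑ ys, ∏ j : Fin n, ((if j = i then (if ys j = y then (1:ℝ) else 0) *
              (qXZ x (zs j) / ∑ x', qXZ x' (zs j)) else 1) *
              ((∑ x', qXZ x' (zs j)) * ρ j.val (zs j) (ys j))) :=
            Finset.sum_congr rfl fun zs _ => Finset.sum_congr rfl fun ys _ => step zs ys
        _ = ∏ j : Fin n, ∑ a, ∑ b, ((if j = i then (if b = y then (1:ℝ) else 0) *
              (qXZ x a / ∑ x', qXZ x' a) else 1) *
              ((∑ x', qXZ x' a) * ρ j.val a b)) :=
            sum_sum_fun_prod (fun (j : Fin n) (a : Z) (b : Y) =>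
              (if j = i then (if b = y then (1:ℝ) else 0) *
              (qXZ x a / ∑ x', qXZ x' a) else 1) * ((∑ x', qXZ x' a) * ρ j.val a b))
        _ = ∏ j : Fin n, if j = i then c else 1 := by
            refine Finset.prod_congr rfl fun j _ => ?_
            by_cases hj : j = i
            · simp only [hj, if_pos rfl, hival, hc]
              simp only [mul_assoc, ite_mul, one_mul, zero_mul, Finset.sum_ite_eq',
                Finset.mem_univ, if_true]
              refine Finset.sum_congr rfl fun z _ => ?_
              rw [← mul_assoc, hratio z]
            · simp only [if_neg hj, one_mul]
              calc ∑ a, ∑ b, (∑ x', qXZ x' a) * ρ j.val a b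
                  = ∑ a, (∑ x', qXZ x' a) * ∑ b, ρ j.val a b := by
                    refine Finset.sum_congr rfl fun a _ => ?_
                    rw [Finset.mul_sum]
                _ = ∑ a, ∑ x', qXZ x' a := by
                    refine Finset.sum_congr rfl fun a _ => ?_
                    rw [(hρ j.val a).2, mul_one]
                _ = 1 := hqZ1
        _ = c := by simp [Finset.prod_ite_eq']
    -- the conditional factorization for a fixed z-sequence
    have hD : ∀ (zs : Fin n → Z) (ys : Fin n → Y),
        ∑ xs : Fin n → X, (if xs i = x then (1:ℝ) else 0) * P n xs zs ys
        = (∑ x', P n x' zs ys) *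
          ∏ j : Fin n, (if j = i then qXZ x (zs j) / (∑ x', qXZ x' (zs j))
            else (∑ x'', qXZ x'' (zs j)) / (∑ x', qXZ x' (zs j))) := by
      intro zs ys
      calc ∑ xs : Fin n → X, (if xs i = x then (1:ℝ) else 0) * P n xs zs ys
          = ∑ xs : Fin n → X, (∑ x', P n x' zs ys) *
              ((if xs i = x then (1:ℝ) else 0) *
                ∏ j, qXZ (xs j) (zs j) / (∑ x', qXZ x' (zs j))) := by
            refine Finset.sum_congr rfl fun xs _ => ?_
            rw [hMarkov n xs zs ys]; ring
        _ = (∑ x', P n x' zs ys) * ∑ xs : Fin n → X, ((if xs i = x then (1:ℝ) else 0) *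
                ∏ j, qXZ (xs j) (zs j) / (∑ x', qXZ x' (zs j))) := by
            rw [Finset.mul_sum]
        _ = (∑ x', P n x' zs ys) *
            ∏ j : Fin n, (if j = i then qXZ x (zs j) / (∑ x', qXZ x' (zs j))
              else (∑ x'', qXZ x'' (zs j)) / (∑ x', qXZ x' (zs j))) := by
            congr 1
            have step2 : ∀ xs : Fin n → X,
                (if xs i = x then (1:ℝ) else 0) *
                  ∏ j, qXZ (xs j) (zs j) / (∑ x', qXZ x' (zs j))
                = ∏ j, ((if j = i then (if xs j = x then (1:ℝ) else 0) else 1) *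
                    (qXZ (xs j) (zs j) / (∑ x', qXZ x' (zs j)))) := by
              intro xs
              conv_rhs => rw [Finset.prod_mul_distrib]
              congr 1
              simp [Finset.prod_ite_eq']
            rw [Finset.sum_congr rfl fun xs _ => step2 xs]
            rw [sum_fun_prod (fun (j : Fin n) (a : X) =>
              (if j = i then (if a = x then (1:ℝ) else 0) else 1) *
                (qXZ a (zs j) / (∑ x', qXZ x' (zs j))))]
            refine Finset.prod_congr rfl fun j _ => ?_
            by_cases hj : j = i
            · simp [hj, ite_mul, Finset.sum_ite_eq']
            · simp only [if_neg hj, one_mul]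
              rw [← Finset.sum_div]
    -- the product over j collapses (or everything vanishes)
    have hDval : ∀ (zs : Fin n → Z) (ys : Fin n → Y),
        (∑ x', P n x' zs ys) *
          ∏ j : Fin n, (if j = i then qXZ x (zs j) / (∑ x', qXZ x' (zs j))
            else (∑ x'', qXZ x'' (zs j)) / (∑ x', qXZ x' (zs j)))
        = (∑ x', P n x' zs ys) * (qXZ x (zs i) / (∑ x', qXZ x' (zs i))) := by
      intro zs ys
      by_cases hz : ∃ j, (∑ x', qXZ x' (zs j)) = 0
      · obtain ⟨j0, hj0⟩ := hz
        have hPz : (∑ x', P n x' zs ys) = 0 := by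
          refine Finset.sum_eq_zero fun xs _ => ?_
          have hnn : ∀ s ∈ (Finset.univ : Finset (Fin n → Y)), 0 ≤ P n xs zs s :=
            fun ys' _ => (hP n).1 (xs, zs, ys')
          have hsum : ∑ ys' : Fin n → Y, P n xs zs ys' = 0 := by
            rw [hPXZ n xs zs]
            exact Finset.prod_eq_zero (Finset.mem_univ j0) (hzero _ hj0 _)
          exact (Finset.sum_eq_zero_iff_of_nonneg hnn).1 hsum ys (Finset.mem_univ ys)
        rw [hPz]; ring
      · push_neg at hz
        congr 1
        calc ∏ j : Fin n, (if j = i then qXZ x (zs j) / (∑ x', qXZ x' (zs j))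
              else (∑ x'', qXZ x'' (zs j)) / (∑ x', qXZ x' (zs j)))
            = ∏ j : Fin n, (if j = i then qXZ x (zs j) / (∑ x', qXZ x' (zs j)) else 1) := by
              refine Finset.prod_congr rfl fun j _ => ?_
              by_cases hj : j = i
              · simp [hj]
              · simp [hj, div_self (hz j)]
          _ = qXZ x (zs i) / (∑ x', qXZ x' (zs i)) := by simp [Finset.prod_ite_eq']
    -- claim (c): the two weighted P-marginals agree
    have hAB : (∑ xy : (Fin n → X) × (Fin n → Y), wXY xy * ∑ zs, P n xy.1 zs xy.2)
        = ∑ zy : (Fin n → Z) × (Fin n → Y), wZY zy * ∑ xs, P n xs zy.1 zy.2 := by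
      rw [Fintype.sum_prod_type, Fintype.sum_prod_type]
      calc ∑ xs, ∑ ys, wXY (xs, ys) * ∑ zs, P n xs zs ys
          = ∑ xs, ∑ ys, ∑ zs, wXY (xs, ys) * P n xs zs ys := by
            refine Finset.sum_congr rfl fun xs _ => Finset.sum_congr rfl fun ys _ => ?_
            rw [Finset.mul_sum]
        _ = ∑ xs : Fin n → X, ∑ zs : Fin n → Z, ∑ ys : Fin n → Y,
              wXY (xs, ys) * P n xs zs ys :=
            Finset.sum_congr rfl fun xs _ => Finset.sum_comm
        _ = ∑ zs : Fin n → Z, ∑ xs : Fin n → X, ∑ ys : Fin n → Y,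
              wXY (xs, ys) * P n xs zs ys := Finset.sum_comm
        _ = ∑ zs : Fin n → Z, ∑ ys : Fin n → Y, ∑ xs : Fin n → X,
              wXY (xs, ys) * P n xs zs ys :=
            Finset.sum_congr rfl fun zs _ => Finset.sum_comm
        _ = ∑ zs : Fin n → Z, ∑ ys : Fin n → Y, (if ys i = y then (1:ℝ) else 0) *
              ∑ xs : Fin n → X, (if xs i = x then (1:ℝ) else 0) * P n xs zs ys := by
            refine Finset.sum_congr rfl fun zs _ => Finset.sum_congr rfl fun ys _ => ?_
            rw [Finset.mul_sum]
            refine Finset.sum_congr rfl fun xs _ => ?_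
            rw [hwXY]; ring
        _ = ∑ zs : Fin n → Z, ∑ ys : Fin n → Y, wZY (zs, ys) * ∑ xs, P n xs zs ys := by
            refine Finset.sum_congr rfl fun zs _ => Finset.sum_congr rfl fun ys _ => ?_
            rw [hD zs ys, hDval zs ys, hwZY]; ring
    -- TV bounds
    have e1 := tv_weighted wXY (fun xy : (Fin n → X) × (Fin n → Y) => ∑ z, P n xy.1 z xy.2)
      (fun xy => ∏ j, qXY (xy.1 j) (xy.2 j)) habs1
    have e2 := tv_weighted wZY (fun zy : (Fin n → Z) × (Fin n → Y) => ∑ x', P n x' zy.1 zy.2)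
      (fun zy => ∏ j : Fin n, (∑ x', qXZ x' (zy.1 j)) * ρ j.val (zy.1 j) (zy.2 j)) habs2
    rw [ha] at e1
    rw [hb] at e2
    rw [hAB] at e1
    have habs : |qXY x y - c| ≤
        |qXY x y - ∑ zy : (Fin n → Z) × (Fin n → Y), wZY zy * ∑ xs, P n xs zy.1 zy.2|
        + |(∑ zy : (Fin n → Z) × (Fin n → Y), wZY zy * ∑ xs, P n xs zy.1 zy.2) - c| :=
      abs_sub_le _ _ _
    rw [abs_sub_comm] at e1
    have hTV1' : TV (fun xy : (Fin n → X) × (Fin n → Y) => ∑ z, P n xy.1 z xy.2)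
        (fun xy => ∏ j, qXY (xy.1 j) (xy.2 j)) < ε/4 := hTV1
    have hTV2' : TV (fun zy : (Fin n → Z) × (Fin n → Y) => ∑ x', P n x' zy.1 zy.2)
        (fun zy => ∏ j : Fin n, (∑ x', qXZ x' (zy.1 j)) * ρ j.val (zy.1 j) (zy.2 j)) < ε/4 :=
      hTV2
    linarith
  have h0 : |qXY x y - c| = 0 := by
    by_contra h
    have hpos : 0 < |qXY x y - c| := lt_of_le_of_ne (abs_nonneg _) (Ne.symm h)
    have := key (|qXY x y - c| / 2) (by linarith)
    linarith
  have := abs_eq_zero.1 h0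
  linarith


end RCS
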